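/- Let C be a nonempty closed subset of ℝⁿ and x ∉ C. If there exist two distinct points c₁ ≠ c₂ in C with ‖x − c₁‖ = ‖x − c₂‖ = dist(x, C), then the function y ↦ dist(y, C) is not differentiable at x. -/

import Mathlib

/-- If x has two distinct nearest points in a closed set C, then the distance
function to C is not differentiable at x. -/
theorem not_differentiable_of_two_nearest (n : ℕ)
    (C : Set (EuclideanSpace ℝ (Fin n))) (hC : IsClosed C) (hne : C.Nonempty)
    (x : EuclideanSpace ℝ (Fin n)) (hx : x ∉ C)
    (c₁ c₂ : EuclideanSpace ℝ (Fin n)) (hc₁ : c₁ ∈ C) (hc₂ : c₂ ∈ C)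
    (hne' : c₁ ≠ c₂)
    (h₁ : dist x c₁ = Metric.infDist x C)
    (h₂ : dist x c₂ = Metric.infDist x C) :
    ¬ DifferentiableAt ℝ (fun y => Metric.infDist y C) x := by
  intro hdiff
  set f : EuclideanSpace ℝ (Fin n) → ℝ := fun y => Metric.infDist y C with hf
  set d : ℝ := Metric.infDist x C with hdd
  have hd : 0 < d := (hC.notMem_iff_infDist_pos hne).1 hx
  set L := fderiv ℝ f x with hL
  have hLnorm : ‖L‖ ≤ 1 := by
    have := norm_fderiv_le_of_lipschitz (𝕜 := ℝ) (x₀ := x)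
      (Metric.lipschitz_infDist_pt C)
    simpa using this
  -- directional derivative along a nearest point direction is -d
  have key : ∀ c : EuclideanSpace ℝ (Fin n), c ∈ C → dist x c = d →
      L (c - x) = -d := by
    intro c hc hdc
    have hcurve : HasDerivAt (fun t : ℝ => x + t • (c - x)) (c - x) 0 := by
      simpa using ((hasDerivAt_id (0 : ℝ)).smul_const (c - x)).const_add x
    have hfd : HasFDerivAt f L x := hdiff.hasFDerivAt
    have hfd' : HasFDerivAt f L ((fun t : ℝ => x + t • (c - x)) 0) := by
      simpa using hfd
    have hg : HasDerivAt (fun t : ℝ => f (x + t • (c - x))) (L (c - x)) 0 :=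
      by have := hfd'.comp_hasDerivAt 0 hcurve; exact this
    -- on [0,1], f along the segment equals (1 - t) * d
    have hseg : ∀ t : ℝ, 0 ≤ t → t ≤ 1 → f (x + t • (c - x)) = (1 - t) * d := by
      intro t ht0 ht1
      have hxc : ‖x - c‖ = d := by rw [← dist_eq_norm]; exact hdc
      have hle : f (x + t • (c - x)) ≤ (1 - t) * d := by
        have : f (x + t • (c - x)) ≤ dist (x + t • (c - x)) c :=
          Metric.infDist_le_dist_of_mem hc
        have heq : dist (x + t • (c - x)) c = (1 - t) * d := by
          rw [dist_eq_norm]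
          have : x + t • (c - x) - c = (1 - t) • (x - c) := by
            simp [smul_sub, sub_smul]
            abel
          rw [this, norm_smul, hxc]
          simp [abs_of_nonneg (by linarith : (0:ℝ) ≤ 1 - t)]
        linarith [heq ▸ this]
      have hge : (1 - t) * d ≤ f (x + t • (c - x)) := by
        have h3 : d ≤ f (x + t • (c - x)) + dist x (x + t • (c - x)) :=
          Metric.infDist_le_infDist_add_dist
        have h4 : dist x (x + t • (c - x)) = t * d := by
          rw [dist_eq_norm]
          have : x - (x + t • (c - x)) = t • (x - c) := by
            simp [smul_sub]
          rw [this, norm_smul, hxc, Real.norm_eq_abs, abs_of_nonneg ht0]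
        nlinarith
      linarith
    -- compare with the model function on Ioi 0
    have hmodel : HasDerivAt (fun t : ℝ => (1 - t) * d) (-d) 0 := by
      have : HasDerivAt (fun t : ℝ => (1 - t)) (-1) 0 := by
        simpa using (hasDerivAt_id (0 : ℝ)).const_sub 1
      simpa using this.mul_const d
    have hEq : (fun t : ℝ => f (x + t • (c - x))) =ᶠ[nhdsWithin 0 (Set.Ioi 0)]
        (fun t : ℝ => (1 - t) * d) := by
      filter_upwards [Filter.inter_mem self_mem_nhdsWithin
        (nhdsWithin_le_nhds (Metric.ball_mem_nhds (0:ℝ) one_pos))] with t ht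
      obtain ⟨ht0, htb⟩ := ht
      have ht1 : t ≤ 1 := by
        have := abs_lt.1 (by simpa [Real.dist_eq] using htb)
        linarith [this.2]
      exact hseg t (le_of_lt ht0) ht1
    have hval : f (x + (0:ℝ) • (c - x)) = (1 - (0:ℝ)) * d := by
      simp [hf, hdd]
    have h1 : HasDerivWithinAt (fun t : ℝ => f (x + t • (c - x))) (L (c - x))
        (Set.Ioi 0) 0 := hg.hasDerivWithinAt
    have h2 : HasDerivWithinAt (fun t : ℝ => f (x + t • (c - x))) (-d)
        (Set.Ioi 0) 0 :=
      hmodel.hasDerivWithinAt.congr_of_eventuallyEq hEq hval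
    have e1 := h1.derivWithin (uniqueDiffWithinAt_Ioi (0:ℝ))
    have e2 := h2.derivWithin (uniqueDiffWithinAt_Ioi (0:ℝ))
    rw [← e1, ← e2]
  have k1 : L (c₁ - x) = -d := key c₁ hc₁ h₁
  have k2 : L (c₂ - x) = -d := key c₂ hc₂ h₂
  have hn1 : ‖c₁ - x‖ = d := by rw [← dist_eq_norm, dist_comm]; exact h₁
  have hn2 : ‖c₂ - x‖ = d := by rw [← dist_eq_norm, dist_comm]; exact h₂
  have hray : ¬ SameRay ℝ (c₁ - x) (c₂ - x) := by
    intro hs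
    have : c₁ - x = c₂ - x := hs.eq_of_norm_eq (by rw [hn1, hn2])
    exact hne' (sub_left_inj.mp this)
  have hlt : ‖(c₁ - x) + (c₂ - x)‖ < 2 * d := by
    have := norm_add_lt_of_not_sameRay hray
    rw [hn1, hn2] at this
    linarith
  have hsum : L ((c₁ - x) + (c₂ - x)) = -(2 * d) := by
    rw [map_add, k1, k2]; ring
  have habs : 2 * d ≤ ‖(c₁ - x) + (c₂ - x)‖ := by
    have hb := L.le_opNorm ((c₁ - x) + (c₂ - x))
    rw [hsum] at hb
    have : 2 * |d| ≤ ‖L‖ * ‖(c₁ - x) + (c₂ - x)‖ := by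
      simpa [Real.norm_eq_abs] using hb
    rw [abs_of_nonneg hd.le] at this
    calc 2 * d ≤ ‖L‖ * ‖(c₁ - x) + (c₂ - x)‖ := this
      _ ≤ 1 * ‖(c₁ - x) + (c₂ - x)‖ := by
          apply mul_le_mul_of_nonneg_right hLnorm (norm_nonneg _)
      _ = _ := one_mul _
  linarith
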